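/- Let λ, μ ∈ Λ(N,r), let d ∈ D_{λμ}, and set a_{i,j} = |N_i^λ ∩ d(N_j^μ)| for 1 ≤ i, j ≤ N. Then d⁻¹ W_λ d ∩ W_μ = W_ν, where ν ∈ Λ(N²,r) is the column-reading composition ν = (a_{1,1}, a_{2,1}, …, a_{N,1}, a_{1,2}, a_{2,2}, …, a_{N,2}, …, a_{1,N}, …, a_{N,N}); in particular, d⁻¹ W_λ d ∩ W_μ is a Young subgroup of W. -/

import Mathlib

open Equiv Finset

/-- The simple transposition `s i = (i, i+1)` (1-based) in the symmetric group `W` on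
`{1, …, r}`, realised as `Equiv.Perm (Fin r)`, where the point `x : Fin r` carries the
label `x.val + 1`.  For `i` outside the range `1 ≤ i < r` we set `s i = 1`. -/
def sT (r : ℕ) (i : ℕ) : Equiv.Perm (Fin r) :=
  if h : 1 ≤ i ∧ i < r then Equiv.swap ⟨i - 1, by omega⟩ ⟨i, h.2⟩ else 1

/-- The ascending product `s_a · s_{a+1} ⋯ s_{a+n-1}` (equal to `1` when `n = 0`);
the rightmost factor acts first. -/
def ascProd (r a n : ℕ) : Equiv.Perm (Fin r) :=
  ((List.range n).map (fun t => sT r (a + t))).prod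

/-- The descending product `s_b · s_{b-1} ⋯ s_{b-n+1}` (equal to `1` when `n = 0`);
the rightmost factor acts first. -/
def descProd (r b n : ℕ) : Equiv.Perm (Fin r) :=
  ((List.range n).map (fun t => sT r (b - t))).prod

/-- The Coxeter length `ℓ(w)`, i.e. the number of inversions of `w`. -/
def clen {r : ℕ} (w : Equiv.Perm (Fin r)) : ℕ :=
  (Finset.univ.filter (fun p : Fin r × Fin r => p.1 < p.2 ∧ w p.2 < w p.1)).card

/-- `ptil lam i` is the partial sum `λ̃_i = λ_1 + ⋯ + λ_i` (1-based `i`). -/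
def ptil {N : ℕ} (lam : Fin N → ℕ) (i : ℕ) : ℕ :=
  ∑ l : Fin N, if l.val + 1 ≤ i then lam l else 0

/-- The block `N_i^λ = {λ̃_{i-1}+1, …, λ̃_i}` (1-based `i`), as a set of points of `Fin r`
(the point `x` has label `x.val + 1`). -/
def blockSet (r : ℕ) {N : ℕ} (lam : Fin N → ℕ) (i : ℕ) : Finset (Fin r) :=
  Finset.univ.filter (fun x => ptil lam (i - 1) ≤ x.val ∧ x.val < ptil lam i)

/-- The index of the block of `λ` containing the point `x`. -/
def blockOf {r N : ℕ} (lam : Fin N → ℕ) (x : Fin r) : ℕ :=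
  ((Finset.range N).filter (fun i => ptil lam (i + 1) ≤ x.val)).card

/-- The Young subgroup `W_λ`: all permutations stabilizing each block `N_i^λ`. -/
def young (r : ℕ) {N : ℕ} (lam : Fin N → ℕ) : Subgroup (Equiv.Perm (Fin r)) where
  carrier := {w | ∀ x : Fin r, blockOf lam (w x) = blockOf lam x}
  one_mem' := by intro x; rfl
  mul_mem' := by
    intro a b ha hb x
    have h := (ha (b x)).trans (hb x)
    simpa [Equiv.Perm.mul_apply] using h
  inv_mem' := by
    intro a ha x
    have h := ha (a⁻¹ x)
    simpa using h.symm

/-- The double coset `W_λ d W_μ`, as a set of permutations. -/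
def dcoset (r : ℕ) {N : ℕ} (lam mu : Fin N → ℕ) (d : Equiv.Perm (Fin r)) :
    Set (Equiv.Perm (Fin r)) :=
  {w | ∃ x ∈ young r lam, ∃ y ∈ young r mu, w = x * d * y}

/-- `d ∈ 𝒟_{λμ}`: `d` has minimal length in its double coset `W_λ d W_μ`. -/
def isMinRep (r : ℕ) {N : ℕ} (lam mu : Fin N → ℕ) (d : Equiv.Perm (Fin r)) : Prop :=
  ∀ w ∈ dcoset r lam mu d, clen d ≤ clen w

/-- The composition `ro M` of row sums of a matrix. -/
def rowSums {N : ℕ} (M : Fin N → Fin N → ℕ) : Fin N → ℕ := fun i => ∑ j, M i j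

/-- The composition `co M` of column sums of a matrix. -/
def colSums {N : ℕ} (M : Fin N → Fin N → ℕ) : Fin N → ℕ := fun j => ∑ i, M i j

/-- `d` is the distinguished double coset representative `d_M` attached to the matrix `M`:
`d` is the minimal length element in its `(W_{ro M}, W_{co M})` double coset, and
`|N_i^{ro M} ∩ d(N_j^{co M})| = m_{i,j}` for all `i, j`. -/
def isDM (r : ℕ) {N : ℕ} (M : Fin N → Fin N → ℕ) (d : Equiv.Perm (Fin r)) : Prop :=
  isMinRep r (rowSums M) (colSums M) d ∧
    ∀ i j : Fin N,
      ((blockSet r (rowSums M) (i.val + 1)) ∩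
        (blockSet r (colSums M) (j.val + 1)).image d).card = M i j

/-- The `(i,j)` entry of `M` with 1-based indices (`0` outside the range). -/
def ent {N : ℕ} (M : Fin N → Fin N → ℕ) (i j : ℕ) : ℕ :=
  if h : 1 ≤ i ∧ i ≤ N ∧ 1 ≤ j ∧ j ≤ N then M ⟨i - 1, by omega⟩ ⟨j - 1, by omega⟩ else 0

/-- `μ̃_{j-1}` for `μ = co M`: the sum of the first `j - 1` column sums of `M`. -/
def colPS {N : ℕ} (M : Fin N → Fin N → ℕ) (j : ℕ) : ℕ :=
  ∑ p : Fin N × Fin N, if p.2.val + 1 < j then M p.1 p.2 else 0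

/-- `σ_{i,j} = μ̃_{j-1} + Σ_{k ≤ i, l ≥ j} m_{k,l}` (1-based `i, j`). -/
def sigmaS {N : ℕ} (M : Fin N → Fin N → ℕ) (i j : ℕ) : ℕ :=
  colPS M j + ∑ p : Fin N × Fin N, if p.1.val + 1 ≤ i ∧ j ≤ p.2.val + 1 then M p.1 p.2 else 0

/-- `m̃_{i,j} = μ̃_{j-1} + Σ_{h ≤ i} m_{h,j}` (1-based `i, j`): the partial sum of the
column-reading sequence of `M` up to the entry `(i, j)`. -/
def mtil {N : ℕ} (M : Fin N → Fin N → ℕ) (i j : ℕ) : ℕ :=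
  colPS M j + ∑ p : Fin N × Fin N, if p.1.val + 1 ≤ i ∧ p.2.val + 1 = j then M p.1 p.2 else 0

/-- The element `w_{i,j}` (1-based `i, j`):
`w_{i,j} = (s_{σ_{i-1,j}} ⋯ s_{m̃_{i-1,j}+1})(s_{σ_{i-1,j}+1} ⋯ s_{m̃_{i-1,j}+2}) ⋯
(s_{σ_{i-1,j}+m_{i,j}-1} ⋯ s_{m̃_{i,j}})`, with `w_{i,j} = 1` when `m_{i,j} = 0` or
`σ_{i-1,j} = m̃_{i-1,j}`. -/
def wE (r : ℕ) {N : ℕ} (M : Fin N → Fin N → ℕ) (i j : ℕ) : Equiv.Perm (Fin r) :=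
  ((List.range (ent M i j)).map
    (fun x => descProd r (sigmaS M (i - 1) j + x) (sigmaS M (i - 1) j - mtil M (i - 1) j))).prod

/-- The column product `w_{2,j} w_{3,j} ⋯ w_{N,j}`. -/
def colProd (r : ℕ) {N : ℕ} (M : Fin N → Fin N → ℕ) (j : ℕ) : Equiv.Perm (Fin r) :=
  ((List.range (N - 1)).map (fun t => wE r M (t + 2) j)).prod

/-- `Π_t`: the product of the first `t` column products
`(w_{2,1} ⋯ w_{N,1})(w_{2,2} ⋯ w_{N,2}) ⋯ (w_{2,t} ⋯ w_{N,t})`. -/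
def piProd (r : ℕ) {N : ℕ} (M : Fin N → Fin N → ℕ) (t : ℕ) : Equiv.Perm (Fin r) :=
  ((List.range t).map (fun c => colProd r M (c + 1))).prod

section Aux

open Equiv Finset

lemma downclosed_eq_range (S : Finset ℕ) (h : ∀ i ∈ S, ∀ j, j ≤ i → j ∈ S) :
    S = Finset.range S.card := by
  have key : ∀ k, k ∈ S ↔ k < S.card := by
    intro k
    constructor
    · intro hk
      have hsub : Finset.range (k + 1) ⊆ S := by
        intro j hj
        exact h k hk j (by simpa using Nat.lt_succ_iff.mp (Finset.mem_range.mp hj))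
      have := Finset.card_le_card hsub
      simpa using this
    · intro hk
      by_contra hknot
      have hsub : S ⊆ Finset.range k := by
        intro m hm
        rw [Finset.mem_range]
        by_contra hmk
        exact hknot (h m hm k (by omega))
      have := Finset.card_le_card hsub
      simp at this
      omega
  ext k
  rw [key, Finset.mem_range]

lemma ptil_mono {N : ℕ} (lam : Fin N → ℕ) {i i' : ℕ} (h : i ≤ i') :
    ptil lam i ≤ ptil lam i' := by
  apply Finset.sum_le_sum
  intro l _
  split_ifs <;> omega

lemma ptil_zero {N : ℕ} (lam : Fin N → ℕ) : ptil lam 0 = 0 := by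
  apply Finset.sum_eq_zero
  intro l _
  rw [if_neg (by omega)]

lemma ptil_top {N : ℕ} (lam : Fin N → ℕ) : ptil lam N = ∑ i, lam i := by
  apply Finset.sum_congr rfl
  intro l _
  rw [if_pos (by omega)]

lemma blockOf_spec {r N : ℕ} (lam : Fin N → ℕ) (hr : ptil lam N = r) (x : Fin r) :
    blockOf lam x < N ∧ ptil lam (blockOf lam x) ≤ x.val ∧
      x.val < ptil lam (blockOf lam x + 1) := by
  classical
  set S := (Finset.range N).filter (fun i => ptil lam (i + 1) ≤ x.val) with hSdef
  have hb : blockOf lam x = S.card := rfl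
  have hdc : ∀ i ∈ S, ∀ j, j ≤ i → j ∈ S := by
    intro i hi j hj
    rw [hSdef, Finset.mem_filter, Finset.mem_range] at hi ⊢
    exact ⟨by omega, le_trans (ptil_mono lam (by omega)) hi.2⟩
  have hS : S = Finset.range S.card := downclosed_eq_range S hdc
  have hmem : ∀ k, k ∈ S ↔ k < S.card := by
    intro k
    constructor
    · intro hk
      have : k ∈ Finset.range S.card := hS ▸ hk
      simpa using this
    · intro hk
      have : k ∈ Finset.range S.card := Finset.mem_range.mpr hk
      rwa [← hS] at this
  have hcard_le : S.card ≤ N := by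
    have := Finset.card_filter_le (Finset.range N) (fun i => ptil lam (i + 1) ≤ x.val)
    simpa using this
  have hxr : x.val < r := x.isLt
  have hN0 : 0 < N := by
    by_contra h
    have : N = 0 := by omega
    subst this
    rw [ptil_zero] at hr
    omega
  have hblt : S.card < N := by
    rcases Nat.lt_or_ge S.card N with h | h
    · exact h
    · exfalso
      have hcN : S.card = N := le_antisymm hcard_le h
      have : N - 1 ∈ S := (hmem _).mpr (by omega)
      rw [hSdef, Finset.mem_filter] at this
      have h2 := this.2
      have : N - 1 + 1 = N := by omega
      rw [this] at h2
      omega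
  refine ⟨hb ▸ hblt, ?_, ?_⟩
  · rw [hb]
    rcases Nat.eq_zero_or_pos S.card with h0 | hpos
    · rw [h0, ptil_zero]; omega
    · have : S.card - 1 ∈ S := (hmem _).mpr (by omega)
      rw [hSdef, Finset.mem_filter] at this
      have h2 := this.2
      have heq : S.card - 1 + 1 = S.card := by omega
      rwa [heq] at h2
  · rw [hb]
    have hnotmem : S.card ∉ S := fun hk => by have := (hmem _).mp hk; omega
    by_contra h
    push_neg at h
    exact hnotmem (by rw [hSdef, Finset.mem_filter, Finset.mem_range]; exact ⟨hblt, h⟩)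

lemma blockOf_eq_of {r N : ℕ} (lam : Fin N → ℕ) (hr : ptil lam N = r) (x : Fin r)
    {i : ℕ} (hiN : i < N) (h1 : ptil lam i ≤ x.val) (h2 : x.val < ptil lam (i + 1)) :
    blockOf lam x = i := by
  obtain ⟨hbN, hb1, hb2⟩ := blockOf_spec lam hr x
  rcases lt_trichotomy (blockOf lam x) i with h | h | h
  · exfalso
    have := ptil_mono lam (show blockOf lam x + 1 ≤ i by omega)
    omega
  · exact h
  · exfalso
    have := ptil_mono lam (show i + 1 ≤ blockOf lam x by omega)
    omega

lemma mem_blockSet_iff {r N : ℕ} (lam : Fin N → ℕ) (hr : ptil lam N = r) (x : Fin r)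
    {i : ℕ} (hiN : i < N) :
    x ∈ blockSet r lam (i + 1) ↔ blockOf lam x = i := by
  have hs : i + 1 - 1 = i := by omega
  rw [blockSet, Finset.mem_filter, hs]
  constructor
  · rintro ⟨-, h1, h2⟩
    exact blockOf_eq_of lam hr x hiN h1 h2
  · intro h
    obtain ⟨-, hb1, hb2⟩ := blockOf_spec lam hr x
    rw [h] at hb1 hb2
    exact ⟨Finset.mem_univ x, hb1, hb2⟩

lemma blockOf_mono {r N : ℕ} (lam : Fin N → ℕ) {x y : Fin r} (h : x.val ≤ y.val) :
    blockOf lam x ≤ blockOf lam y := by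
  apply Finset.card_le_card
  intro i hi
  rw [Finset.mem_filter] at hi ⊢
  exact ⟨hi.1, by omega⟩

lemma nat_cancel {N a b a' b' : ℕ} (hb : b < N) (hb' : b' < N)
    (h : N * a + b = N * a' + b') : a = a' ∧ b = b' := by
  have ha : a = a' := by
    rcases lt_trichotomy a a' with hlt | heq | hgt
    · exfalso
      have h1 : N * (a + 1) ≤ N * a' := Nat.mul_le_mul_left N hlt
      rw [Nat.mul_succ] at h1
      linarith
    · exact heq
    · exfalso
      have h1 : N * (a' + 1) ≤ N * a := Nat.mul_le_mul_left N hgt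
      rw [Nat.mul_succ] at h1
      linarith
  subst ha
  exact ⟨rfl, by omega⟩

lemma card_val_lt {r : ℕ} (m : ℕ) (hm : m ≤ r) :
    (Finset.univ.filter (fun z : Fin r => z.val < m)).card = m := by
  have himg : (Finset.univ.filter (fun z : Fin r => z.val < m)).image Fin.val
      = Finset.range m := by
    ext k
    simp only [Finset.mem_image, Finset.mem_filter, Finset.mem_univ, true_and,
      Finset.mem_range]
    constructor
    · rintro ⟨z, hz, rfl⟩; exact hz
    · intro hk; exact ⟨⟨k, by omega⟩, hk, rfl⟩
  calc (Finset.univ.filter (fun z : Fin r => z.val < m)).card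
      = ((Finset.univ.filter (fun z : Fin r => z.val < m)).image Fin.val).card :=
        (Finset.card_image_of_injective _ Fin.val_injective).symm
    _ = (Finset.range m).card := by rw [himg]
    _ = m := Finset.card_range m

lemma swap_val {r : ℕ} (a b p : Fin r) :
    (Equiv.swap a b p).val =
      if p.val = a.val then b.val else if p.val = b.val then a.val else p.val := by
  rcases eq_or_ne p a with rfl | ha
  · rw [Equiv.swap_apply_left, if_pos rfl]
  · rcases eq_or_ne p b with rfl | hb
    · rw [Equiv.swap_apply_right]
      rw [if_neg (fun h => ha (Fin.ext h)), if_pos rfl]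
    · rw [Equiv.swap_apply_of_ne_of_ne ha hb,
        if_neg (fun h => ha (Fin.ext h)), if_neg (fun h => hb (Fin.ext h))]

lemma swap_adj_lt {r : ℕ} {a b p q : Fin r} (hab : a.val + 1 = b.val) (hpq : p < q)
    (hne : ¬(p = a ∧ q = b)) : Equiv.swap a b p < Equiv.swap a b q := by
  have h1 := swap_val a b p
  have h2 := swap_val a b q
  have hv : ¬(p.val = a.val ∧ q.val = b.val) := by
    rintro ⟨x, y⟩; exact hne ⟨Fin.ext x, Fin.ext y⟩
  rw [Fin.lt_def] at hpq ⊢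
  rw [h1, h2]
  split_ifs <;> omega

lemma clen_mul_swap_lt {r : ℕ} (w : Equiv.Perm (Fin r)) (a b : Fin r)
    (hab : a.val + 1 = b.val) (hw : w b < w a) :
    clen (w * Equiv.swap a b) < clen w := by
  classical
  set s := Equiv.swap a b with hsdef
  have hab' : a < b := by rw [Fin.lt_def]; omega
  set S := Finset.univ.filter (fun p : Fin r × Fin r => p.1 < p.2 ∧ w p.2 < w p.1) with hS
  set S' := Finset.univ.filter
    (fun p : Fin r × Fin r => p.1 < p.2 ∧ (w * s) p.2 < (w * s) p.1) with hS'
  have habS : (a, b) ∈ S := by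
    rw [hS, Finset.mem_filter]
    exact ⟨Finset.mem_univ _, hab', hw⟩
  have hψinj : Function.Injective (fun p : Fin r × Fin r => (s p.1, s p.2)) := by
    intro p q h
    simp only [Prod.mk.injEq] at h
    exact Prod.ext (s.injective h.1) (s.injective h.2)
  have key : S' = (S.erase (a, b)).image (fun p : Fin r × Fin r => (s p.1, s p.2)) := by
    ext ⟨p₁, p₂⟩
    simp only [hS, hS', Finset.mem_image, Finset.mem_erase, Finset.mem_filter,
      Finset.mem_univ, true_and]
    simp only [Equiv.Perm.mul_apply]
    constructor
    · rintro ⟨hlt, hinv⟩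
      have hnab : ¬(p₁ = a ∧ p₂ = b) := by
        rintro ⟨rfl, rfl⟩
        rw [hsdef, Equiv.swap_apply_left, Equiv.swap_apply_right] at hinv
        exact absurd hw (lt_asymm hinv)
      refine ⟨(s p₁, s p₂), ⟨?_, ?_, ?_⟩, ?_⟩
      · intro h
        rw [Prod.mk.injEq] at h
        have h1 : p₁ = b := s.injective (by rw [h.1, hsdef, Equiv.swap_apply_right])
        have h2 : p₂ = a := s.injective (by rw [h.2, hsdef, Equiv.swap_apply_left])
        rw [h1, h2] at hlt
        exact absurd hab' (lt_asymm hlt)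
      · exact swap_adj_lt hab hlt hnab
      · exact hinv
      · simp [hsdef, Equiv.swap_apply_self]
    · rintro ⟨⟨q₁, q₂⟩, ⟨hne, hlt, hinv⟩, heq⟩
      rw [Prod.mk.injEq] at heq
      obtain ⟨rfl, rfl⟩ := heq
      have hnab : ¬(q₁ = a ∧ q₂ = b) := by
        rintro ⟨rfl, rfl⟩; exact hne rfl
      refine ⟨swap_adj_lt hab hlt hnab, ?_⟩
      simpa [hsdef, Equiv.swap_apply_self] using hinv
  have hcard : S'.card = (S.erase (a, b)).card := by
    rw [key]
    exact Finset.card_image_of_injective _ hψinj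
  have herase := Finset.card_erase_of_mem habS
  have hpos : 0 < S.card := Finset.card_pos.mpr ⟨(a, b), habS⟩
  show (Finset.univ.filter
    (fun p : Fin r × Fin r => p.1 < p.2 ∧ (w * s) p.2 < (w * s) p.1)).card <
    (Finset.univ.filter (fun p : Fin r × Fin r => p.1 < p.2 ∧ w p.2 < w p.1)).card
  rw [← hS, ← hS', hcard, herase]
  omega

lemma mem_young_iff {r N : ℕ} (kap : Fin N → ℕ) (w : Equiv.Perm (Fin r)) :
    w ∈ young r kap ↔ ∀ x : Fin r, blockOf kap (w x) = blockOf kap x := Iff.rfl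

lemma no_descent {r N : ℕ} (lam mu : Fin N → ℕ) (d : Equiv.Perm (Fin r))
    (hd : isMinRep r lam mu d) {z z' : Fin r} (hzz : z.val + 1 = z'.val)
    (hblock : blockOf mu z = blockOf mu z') : d z < d z' := by
  have hne : z ≠ z' := fun h => by rw [h] at hzz; omega
  rcases lt_trichotomy (d z) (d z') with h | h | h
  · exact h
  · exact absurd (d.injective h) hne
  · exfalso
    have hs : Equiv.swap z z' ∈ young r mu := by
      rw [mem_young_iff]
      intro x
      rcases eq_or_ne x z with rfl | h1
      · rw [Equiv.swap_apply_left]; exact hblock.symm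
      · rcases eq_or_ne x z' with rfl | h2
        · rw [Equiv.swap_apply_right]; exact hblock
        · rw [Equiv.swap_apply_of_ne_of_ne h1 h2]
    have hmem : d * Equiv.swap z z' ∈ dcoset r lam mu d :=
      ⟨1, one_mem _, Equiv.swap z z', hs, by rw [one_mul]⟩
    have hmin := hd _ hmem
    have hlt := clen_mul_swap_lt d z z' hzz h
    omega

/-- The encoding `z ↦ N * blockOf mu z + blockOf lam (d z)`. -/
def gfun {r N : ℕ} (lam mu : Fin N → ℕ) (d : Equiv.Perm (Fin r)) (z : Fin r) : ℕ :=
  N * blockOf mu z + blockOf lam (d z)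

lemma gfun_lt {r N : ℕ} (lam mu : Fin N → ℕ) (d : Equiv.Perm (Fin r))
    (hrl : ptil lam N = r) (hrm : ptil mu N = r) (z : Fin r) :
    gfun lam mu d z < N * N := by
  have h1 := (blockOf_spec mu hrm z).1
  have h2 := (blockOf_spec lam hrl (d z)).1
  have h3 : N * (blockOf mu z + 1) ≤ N * N := Nat.mul_le_mul_left N (by omega)
  rw [Nat.mul_succ] at h3
  show N * blockOf mu z + blockOf lam (d z) < N * N
  linarith

lemma gfun_mono {r N : ℕ} (lam mu : Fin N → ℕ) (d : Equiv.Perm (Fin r))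
    (hrl : ptil lam N = r) (hrm : ptil mu N = r) (hd : isMinRep r lam mu d)
    {z z' : Fin r} (h : z.val ≤ z'.val) : gfun lam mu d z ≤ gfun lam mu d z' := by
  have hadj : ∀ (k : ℕ) (h1 : k < r) (h2 : k + 1 < r),
      gfun lam mu d ⟨k, h1⟩ ≤ gfun lam mu d ⟨k + 1, h2⟩ := by
    intro k h1 h2
    set z₀ : Fin r := ⟨k, h1⟩
    set z₁ : Fin r := ⟨k + 1, h2⟩
    by_cases hb : blockOf mu z₀ = blockOf mu z₁
    · have hdlt : d z₀ < d z₁ := no_descent lam mu d hd rfl hb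
      have hmono : blockOf lam (d z₀) ≤ blockOf lam (d z₁) :=
        blockOf_mono lam (le_of_lt hdlt)
      show N * blockOf mu z₀ + blockOf lam (d z₀) ≤ N * blockOf mu z₁ + blockOf lam (d z₁)
      rw [hb]
      exact Nat.add_le_add_left hmono _
    · have hle : blockOf mu z₀ ≤ blockOf mu z₁ := blockOf_mono mu (by show k ≤ k + 1; omega)
      have hlt : blockOf mu z₀ + 1 ≤ blockOf mu z₁ := by omega
      have h3 : N * (blockOf mu z₀ + 1) ≤ N * blockOf mu z₁ := Nat.mul_le_mul_left N hlt
      rw [Nat.mul_succ] at h3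
      have h4 := (blockOf_spec lam hrl (d z₀)).1
      show N * blockOf mu z₀ + blockOf lam (d z₀) ≤ N * blockOf mu z₁ + blockOf lam (d z₁)
      linarith
  have main : ∀ (n : ℕ) (z z' : Fin r), z'.val = z.val + n →
      gfun lam mu d z ≤ gfun lam mu d z' := by
    intro n
    induction n with
    | zero =>
      intro z z' h
      have : z = z' := Fin.ext (by omega)
      rw [this]
    | succ n ih =>
      intro z z' h
      have hlt : z.val + n < r := by have := z'.isLt; omega
      have hz' : z' = ⟨z.val + n + 1, by have := z'.isLt; omega⟩ := by
        apply Fin.ext; simp only [Fin.val_mk]; omega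
      calc gfun lam mu d z ≤ gfun lam mu d ⟨z.val + n, hlt⟩ := ih z _ rfl
        _ ≤ gfun lam mu d z' := by
            rw [hz']
            exact hadj (z.val + n) hlt (by have := z'.isLt; omega)
  exact main (z'.val - z.val) z z' (by omega)

end Aux
/-- equation (2.2)–(2.3).  For `λ, μ ∈ Λ(N,r)`, `d ∈ 𝒟_{λμ}` and
`a_{i,j} = |N_i^λ ∩ d(N_j^μ)|`, one has `d⁻¹ W_λ d ∩ W_μ = W_ν`, where
`ν ∈ Λ(N², r)` is the column-reading composition
`(a_{1,1}, a_{2,1}, …, a_{N,1}, a_{1,2}, …, a_{N,N})` (position `t` (0-based) holds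
`a_{(t % N)+1, (t / N)+1}`); in particular `d⁻¹ W_λ d ∩ W_μ` is a Young subgroup. -/
theorem stmt14 (N r : ℕ) (lam mu : Fin N → ℕ)
    (hlam : ∑ i, lam i = r) (hmu : ∑ j, mu j = r)
    (d : Equiv.Perm (Fin r)) (hd : isMinRep r lam mu d)
    (nu : Fin (N * N) → ℕ)
    (hnu : ∀ t : Fin (N * N), nu t =
      ((blockSet r lam (t.val % N + 1)) ∩ (blockSet r mu (t.val / N + 1)).image d).card) :
    {w : Equiv.Perm (Fin r) | (d * w * d⁻¹) ∈ young r lam ∧ w ∈ young r mu}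
      = (young r nu : Set (Equiv.Perm (Fin r))) := by
  classical
  have hrl : ptil lam N = r := (ptil_top lam).trans hlam
  have hrm : ptil mu N = r := (ptil_top mu).trans hmu
  -- fibre description of nu
  have hnucard : ∀ t : Fin (N * N), nu t =
      (Finset.univ.filter (fun z : Fin r => gfun lam mu d z = t.val)).card := by
    intro t
    rcases Nat.eq_zero_or_pos N with rfl | hN
    · exact absurd t.isLt (by simp)
    have hiN : t.val % N < N := Nat.mod_lt _ hN
    have hjN : t.val / N < N := (Nat.div_lt_iff_lt_mul hN).mpr t.isLt
    rw [hnu t]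
    have hset : blockSet r lam (t.val % N + 1) ∩ (blockSet r mu (t.val / N + 1)).image d
        = (Finset.univ.filter (fun z : Fin r => gfun lam mu d z = t.val)).image d := by
      ext y
      simp only [Finset.mem_inter, Finset.mem_image, Finset.mem_filter, Finset.mem_univ,
        true_and]
      constructor
      · rintro ⟨hy1, z, hz, rfl⟩
        refine ⟨z, ?_, rfl⟩
        rw [mem_blockSet_iff lam hrl _ hiN] at hy1
        rw [mem_blockSet_iff mu hrm _ hjN] at hz
        show N * blockOf mu z + blockOf lam (d z) = t.val
        rw [hz, hy1]
        exact Nat.div_add_mod t.val N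
      · rintro ⟨z, hgz, rfl⟩
        have hbl := (blockOf_spec lam hrl (d z)).1
        have heq : N * blockOf mu z + blockOf lam (d z)
            = N * (t.val / N) + t.val % N := by
          have := Nat.div_add_mod t.val N
          calc N * blockOf mu z + blockOf lam (d z) = t.val := hgz
            _ = N * (t.val / N) + t.val % N := this.symm
        obtain ⟨ha, hb⟩ := nat_cancel hbl hiN heq
        exact ⟨(mem_blockSet_iff lam hrl _ hiN).mpr hb,
          z, (mem_blockSet_iff mu hrm _ hjN).mpr ha, rfl⟩
    rw [hset, Finset.card_image_of_injective _ d.injective]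
  -- partial sums of nu
  have hptil : ∀ t, t ≤ N * N → ptil nu t =
      (Finset.univ.filter (fun z : Fin r => gfun lam mu d z < t)).card := by
    intro t ht
    have h1 : ptil nu t = ∑ b ∈ Finset.range t,
        (Finset.univ.filter (fun z : Fin r => gfun lam mu d z = b)).card := by
      calc ptil nu t
          = ∑ l : Fin (N * N), if l.val + 1 ≤ t then
              (Finset.univ.filter (fun z : Fin r => gfun lam mu d z = l.val)).card
            else 0 := by
            apply Finset.sum_congr rfl
            intro l _
            rw [hnucard l]
        _ = ∑ b ∈ Finset.range (N * N), if b + 1 ≤ t then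
              (Finset.univ.filter (fun z : Fin r => gfun lam mu d z = b)).card
            else 0 :=
            Fin.sum_univ_eq_sum_range
              (fun b => if b + 1 ≤ t then
                (Finset.univ.filter (fun z : Fin r => gfun lam mu d z = b)).card else 0)
              (N * N)
        _ = ∑ b ∈ (Finset.range (N * N)).filter (fun b => b + 1 ≤ t),
              (Finset.univ.filter (fun z : Fin r => gfun lam mu d z = b)).card :=
            (Finset.sum_filter _ _).symm
        _ = ∑ b ∈ Finset.range t,
              (Finset.univ.filter (fun z : Fin r => gfun lam mu d z = b)).card := by
            apply Finset.sum_congr _ (fun _ _ => rfl)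
            ext b
            simp only [Finset.mem_filter, Finset.mem_range]
            omega
    have h2 := Finset.card_eq_sum_card_fiberwise
      (f := gfun lam mu d) (s := Finset.univ.filter (fun z : Fin r => gfun lam mu d z < t))
      (t := Finset.range t)
      (fun x hx => Finset.mem_range.mpr (Finset.mem_filter.mp hx).2)
    rw [h1, h2]
    apply Finset.sum_congr rfl
    intro b hb
    rw [Finset.mem_range] at hb
    congr 1
    ext z
    simp only [Finset.mem_filter, Finset.mem_univ, true_and]
    exact ⟨fun h => ⟨by omega, h⟩, fun h => h.2⟩
  -- total sum
  have hrnu : ptil nu (N * N) = r := by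
    rw [hptil (N * N) le_rfl]
    have : Finset.univ.filter (fun z : Fin r => gfun lam mu d z < N * N)
        = Finset.univ := by
      apply Finset.filter_true_of_mem
      intro z _
      exact gfun_lt lam mu d hrl hrm z
    rw [this, Finset.card_univ, Fintype.card_fin]
  -- pointwise block formula
  have hmain : ∀ x : Fin r, blockOf nu x = gfun lam mu d x := by
    intro x
    refine blockOf_eq_of nu hrnu x (gfun_lt lam mu d hrl hrm x) ?_ ?_
    · rw [hptil _ (le_of_lt (gfun_lt lam mu d hrl hrm x))]
      have hsub : Finset.univ.filter (fun z : Fin r => gfun lam mu d z < gfun lam mu d x)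
          ⊆ Finset.univ.filter (fun z : Fin r => z.val < x.val) := by
        intro z hz
        simp only [Finset.mem_filter, Finset.mem_univ, true_and] at hz ⊢
        by_contra h
        push_neg at h
        have := gfun_mono lam mu d hrl hrm hd (show x.val ≤ z.val from h)
        omega
      calc (Finset.univ.filter (fun z : Fin r => gfun lam mu d z < gfun lam mu d x)).card
          ≤ (Finset.univ.filter (fun z : Fin r => z.val < x.val)).card :=
            Finset.card_le_card hsub
        _ = x.val := card_val_lt x.val (le_of_lt x.isLt)
    · rw [hptil _ (gfun_lt lam mu d hrl hrm x)]
      have hsub : Finset.univ.filter (fun z : Fin r => z.val < x.val + 1)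
          ⊆ Finset.univ.filter (fun z : Fin r => gfun lam mu d z < gfun lam mu d x + 1) := by
        intro z hz
        simp only [Finset.mem_filter, Finset.mem_univ, true_and] at hz ⊢
        have := gfun_mono lam mu d hrl hrm hd (show z.val ≤ x.val by omega)
        omega
      have hle := Finset.card_le_card hsub
      rw [card_val_lt (x.val + 1) x.isLt] at hle
      simp only [Nat.succ_eq_add_one] at hle ⊢
      omega
  -- conclude
  ext w
  simp only [Set.mem_setOf_eq, SetLike.mem_coe, mem_young_iff]
  constructor
  · rintro ⟨h1, h2⟩ x
    rw [hmain, hmain]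
    show N * blockOf mu (w x) + blockOf lam (d (w x))
      = N * blockOf mu x + blockOf lam (d x)
    have hl := h1 (d x)
    simp only [Equiv.Perm.mul_apply, Equiv.Perm.inv_def, Equiv.symm_apply_apply] at hl
    rw [h2 x, hl]
  · intro h
    constructor
    · intro x
      have hx := h (d⁻¹ x)
      rw [hmain, hmain] at hx
      have hb1 := (blockOf_spec lam hrl (d (w (d⁻¹ x)))).1
      have hb2 := (blockOf_spec lam hrl (d (d⁻¹ x))).1
      obtain ⟨-, hb⟩ := nat_cancel hb1 hb2 hx
      simp only [Equiv.Perm.mul_apply]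
      rw [hb]
      simp only [Equiv.Perm.inv_def, Equiv.apply_symm_apply]
    · intro x
      have hx := h x
      rw [hmain, hmain] at hx
      have hb1 := (blockOf_spec lam hrl (d (w x))).1
      have hb2 := (blockOf_spec lam hrl (d x)).1
      obtain ⟨ha, -⟩ := nat_cancel hb1 hb2 hx
      exact ha
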